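/- For an n×n Manin matrix M and indices 1 ≤ k₁ < k₂ < ⋯ < k_m ≤ n, one has tr_{1,…,n}(A_n M^{(k₁)} M^{(k₂)} ⋯ M^{(k_m)}) = tr_{1,…,n}(A_n M⁽¹⁾ M⁽²⁾ ⋯ M⁽ᵐ⁾) = (m!(n−m)!/n!) · tr_{1,…,m}(A_m M⁽¹⁾ ⋯ M⁽ᵐ⁾). -/

import Mathlib

open Matrix

/-- `M` is a Manin matrix. -/
def IsManin {R : Type*} [Ring R] {n : ℕ} (M : Matrix (Fin n) (Fin n) R) : Prop :=
  (∀ i k j l : Fin n, i < k → j < l →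
    M i j * M k l - M k l * M i j = M k j * M i l - M i l * M k j) ∧
  (∀ i k j : Fin n, M i j * M k j = M k j * M i j)

/-- `M` acting in the `k`-th tensor leg of (ℂⁿ)^{⊗m} (identity elsewhere). -/
def leg {R : Type*} [Ring R] {n m : ℕ} (M : Matrix (Fin n) (Fin n) R) (k : Fin m) :
    Matrix (Fin m → Fin n) (Fin m → Fin n) R :=
  fun f g => if ∀ l, l ≠ k → f l = g l then M (f k) (g k) else 0

/-- Standard permutation representation of S_m on (ℂⁿ)^{⊗m}:
π(σ)(v₁⊗⋯⊗v_m) = v_{σ⁻¹(1)}⊗⋯⊗v_{σ⁻¹(m)}. -/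
def permMat (R : Type*) [Ring R] (n : ℕ) {m : ℕ} (σ : Equiv.Perm (Fin m)) :
    Matrix (Fin m → Fin n) (Fin m → Fin n) R :=
  fun f g => if f = g ∘ ⇑σ⁻¹ then 1 else 0

/-- The antisymmetrizer A_m = (1/m!) Σ_{σ ∈ S_m} sgn(σ) π(σ) on (ℂⁿ)^{⊗m}. -/
noncomputable def antisym (R : Type*) [Ring R] [Algebra ℚ R] (n m : ℕ) :
    Matrix (Fin m → Fin n) (Fin m → Fin n) R :=
  ((m.factorial : ℚ)⁻¹) •
    ∑ σ : Equiv.Perm (Fin m), ((Equiv.Perm.sign σ : ℤ) : ℚ) • permMat R n σ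

/-- The ordered product M⁽¹⁾·M⁽²⁾⋯M⁽ᵐ⁾ on (ℂⁿ)^{⊗m}. -/
def legProd {R : Type*} [Ring R] {n : ℕ} (M : Matrix (Fin n) (Fin n) R) (m : ℕ) :
    Matrix (Fin m → Fin n) (Fin m → Fin n) R :=
  (List.ofFn fun k : Fin m => leg M k).prod


section ManinAux

variable {R : Type*} [Ring R] [Algebra ℚ R] {n N m : ℕ}

def altD (M : Matrix (Fin n) (Fin n) R) (h : Fin m → Fin n) : R :=
  ∑ τ : Equiv.Perm (Fin m), ((Equiv.Perm.sign τ : ℤ)) •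
    (List.ofFn fun i => M (h i) (h (τ i))).prod

def bigG (M : Matrix (Fin n) (Fin n) R) (k : Fin m → Fin N) (g : Fin N → Fin n) : R :=
  ∑ σ : Equiv.Perm (Fin N), ((Equiv.Perm.sign σ : ℤ)) •
    (if ∀ l, (∀ i, k i ≠ l) → g l = g (σ l)
     then (List.ofFn fun i => M (g (k i)) (g (σ (k i)))).prod else 0)

lemma eq_zero_of_self_eq_neg' {a : R} (h : a = -a) : a = 0 := by
  have h2 : (2 : ℚ) • a = 0 := by
    rw [two_smul]
    nth_rewrite 1 [h]; simp
  have := congrArg (fun x => ((2:ℚ)⁻¹) • x) h2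
  simpa [smul_smul] using this

lemma altD_eq_zero (M : Matrix (Fin n) (Fin n) R) {h : Fin m → Fin n}
    (hh : ¬ Function.Injective h) : altD M h = 0 := by
  rw [Function.Injective] at hh
  push_neg at hh
  obtain ⟨p, q, hpq, hne⟩ := hh
  have hswap : ∀ y, h (Equiv.swap p q y) = h y := by
    intro y
    rcases eq_or_ne y p with rfl | hyp
    · rw [Equiv.swap_apply_left]; exact hpq.symm
    rcases eq_or_ne y q with rfl | hyq
    · rw [Equiv.swap_apply_right]; exact hpq
    · rw [Equiv.swap_apply_of_ne_of_ne hyp hyq]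
  apply eq_zero_of_self_eq_neg'
  have key : ∀ τ : Equiv.Perm (Fin m),
      -(((Equiv.Perm.sign τ : ℤ)) • (List.ofFn fun i => M (h i) (h (τ i))).prod)
      = ((Equiv.Perm.sign (Equiv.swap p q * τ) : ℤ)) •
          (List.ofFn fun i => M (h i) (h ((Equiv.swap p q * τ) i))).prod := by
    intro τ
    have h1 : (List.ofFn fun i => M (h i) (h ((Equiv.swap p q * τ) i)))
        = List.ofFn fun i => M (h i) (h (τ i)) := by
      congr 1; funext i
      rw [Equiv.Perm.mul_apply, hswap]
    rw [h1, Equiv.Perm.sign_mul, Equiv.Perm.sign_swap hne]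
    simp
  have hsum := Fintype.sum_equiv (Equiv.mulLeft (Equiv.swap p q))
    (fun τ => -(((Equiv.Perm.sign τ : ℤ)) • (List.ofFn fun i => M (h i) (h (τ i))).prod))
    (fun τ => ((Equiv.Perm.sign τ : ℤ)) • (List.ofFn fun i => M (h i) (h (τ i))).prod)
    (fun τ => by simpa [Equiv.coe_mulLeft] using key τ)
  rw [Finset.sum_neg_distrib] at hsum
  rw [altD]
  exact neg_eq_iff_eq_neg.mp hsum

lemma bigG_eq_zero (M : Matrix (Fin n) (Fin n) R) (k : Fin m → Fin N) {g : Fin N → Fin n}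
    (hg : ¬ Function.Injective g) : bigG M k g = 0 := by
  rw [Function.Injective] at hg
  push_neg at hg
  obtain ⟨p, q, hpq, hne⟩ := hg
  have hswap : ∀ y, g (Equiv.swap p q y) = g y := by
    intro y
    rcases eq_or_ne y p with rfl | hyp
    · rw [Equiv.swap_apply_left]; exact hpq.symm
    rcases eq_or_ne y q with rfl | hyq
    · rw [Equiv.swap_apply_right]; exact hpq
    · rw [Equiv.swap_apply_of_ne_of_ne hyp hyq]
  apply eq_zero_of_self_eq_neg'
  have key : ∀ σ : Equiv.Perm (Fin N),
      -(((Equiv.Perm.sign σ : ℤ)) •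
          (if ∀ l, (∀ i, k i ≠ l) → g l = g (σ l)
           then (List.ofFn fun i => M (g (k i)) (g (σ (k i)))).prod else 0))
      = ((Equiv.Perm.sign (Equiv.swap p q * σ) : ℤ)) •
          (if ∀ l, (∀ i, k i ≠ l) → g l = g ((Equiv.swap p q * σ) l)
           then (List.ofFn fun i => M (g (k i)) (g ((Equiv.swap p q * σ) (k i)))).prod
           else 0) := by
    intro σ
    have h1 : (if ∀ l, (∀ i, k i ≠ l) → g l = g ((Equiv.swap p q * σ) l)
           then (List.ofFn fun i => M (g (k i)) (g ((Equiv.swap p q * σ) (k i)))).prod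
           else 0)
        = (if ∀ l, (∀ i, k i ≠ l) → g l = g (σ l)
           then (List.ofFn fun i => M (g (k i)) (g (σ (k i)))).prod else 0) := by
      simp only [Equiv.Perm.mul_apply, hswap]
    rw [h1, Equiv.Perm.sign_mul, Equiv.Perm.sign_swap hne]
    split_ifs <;> simp
  have hsum := Fintype.sum_equiv (Equiv.mulLeft (Equiv.swap p q))
    (fun σ => -(((Equiv.Perm.sign σ : ℤ)) •
        (if ∀ l, (∀ i, k i ≠ l) → g l = g (σ l)
         then (List.ofFn fun i => M (g (k i)) (g (σ (k i)))).prod else 0)))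
    (fun σ => ((Equiv.Perm.sign σ : ℤ)) •
        (if ∀ l, (∀ i, k i ≠ l) → g l = g (σ l)
         then (List.ofFn fun i => M (g (k i)) (g (σ (k i)))).prod else 0))
    (fun σ => by exact key σ)
  rw [Finset.sum_neg_distrib] at hsum
  rw [bigG]
  exact neg_eq_iff_eq_neg.mp hsum

lemma bigG_inj (M : Matrix (Fin n) (Fin n) R) (k : Fin m → Fin N)
    (hk : Function.Injective k) {g : Fin N → Fin n}
    (hg : Function.Injective g) : bigG M k g = altD M (g ∘ k) := by
  classical
  rw [bigG]
  -- replace the condition by "σ fixes the complement of the range of k"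
  have hcond : ∀ σ : Equiv.Perm (Fin N),
      ((∀ l, (∀ i, k i ≠ l) → g l = g (σ l)) ↔ (∀ l, (∀ i, k i ≠ l) → σ l = l)) := by
    intro σ
    constructor
    · intro hc l hl; exact (hg (hc l hl)).symm
    · intro hc l hl; rw [hc l hl]
  rw [Finset.sum_congr rfl (fun σ _ => by
    rw [if_congr (hcond σ) rfl rfl, smul_ite, smul_zero])]
  rw [← Finset.sum_filter]
  -- now a bijection with Perm (Fin m)
  set e : Fin m ≃ Set.range k := Equiv.ofInjective k hk with he
  have hnotin : ∀ l : Fin N, (∀ i, k i ≠ l) ↔ l ∉ Set.range k := by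
    intro l
    constructor
    · rintro h ⟨i, rfl⟩; exact h i rfl
    · intro h i hi; exact h ⟨i, hi⟩
  have hfix : ∀ τ : Equiv.Perm (Fin m), ∀ l, (∀ i, k i ≠ l) → (τ.extendDomain e) l = l := by
    intro τ l hl
    exact Equiv.Perm.extendDomain_apply_not_subtype τ e ((hnotin l).mp hl)
  have himg : ∀ (τ : Equiv.Perm (Fin m)) (i0 : Fin m),
      (τ.extendDomain e) (k i0) = k (τ i0) := by
    intro τ i0
    have h2 : ((e i0 : Set.range k) : Fin N) = k i0 := rfl
    rw [← h2, Equiv.Perm.extendDomain_apply_image]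
    rfl
  rw [altD]
  refine (Finset.sum_nbij (i := fun τ : Equiv.Perm (Fin m) => τ.extendDomain e)
    ?_ ?_ ?_ ?_).symm
  · intro τ _
    rw [Finset.mem_filter]
    exact ⟨Finset.mem_univ _, hfix τ⟩
  · intro τ1 _ τ2 _ hext
    refine Equiv.ext fun i0 => ?_
    have h3 : (τ1.extendDomain e) (k i0) = (τ2.extendDomain e) (k i0) := by
      simp only at hext
      rw [hext]
    rw [himg, himg] at h3
    exact hk h3
  · intro σ hσ
    simp only [Finset.coe_filter, Set.mem_setOf_eq, Finset.mem_univ, true_and] at hσ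
    have hstab : ∀ x, x ∈ Set.range k ↔ σ x ∈ Set.range k := by
      intro x
      constructor
      · intro hx
        by_contra hsx
        have h1 := hσ (σ x) (fun i hi => hsx ⟨i, hi⟩)
        have h2 := σ.injective h1
        rw [h2] at hsx; exact hsx hx
      · intro hsx
        by_contra hx
        have h1 := hσ x (fun i hi => hx ⟨i, hi⟩)
        rw [h1] at hsx; exact hx hsx
    refine (Set.mem_image _ _ _).mpr ⟨(e.trans ((σ.subtypePerm (fun x => (hstab x).symm)).trans e.symm) :
      Equiv.Perm (Fin m)), by simp, ?_⟩
    refine Equiv.ext fun x => ?_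
    by_cases hx : x ∈ Set.range k
    · rw [Equiv.Perm.extendDomain_apply_subtype _ e hx]
      simp [Equiv.Perm.subtypePerm_apply]
    · rw [Equiv.Perm.extendDomain_apply_not_subtype _ e hx]
      exact (hσ x ((hnotin x).mpr hx)).symm
  · intro τ _
    rw [Equiv.Perm.sign_extendDomain]
    have hfun : (fun i => M ((g ∘ k) i) ((g ∘ k) (τ i)))
        = fun i => M (g (k i)) (g ((τ.extendDomain e) (k i))) :=
      funext fun i0 => by rw [himg]; rfl
    rw [hfun]
theorem prod_legs_apply (M : Matrix (Fin n) (Fin n) R) :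
    ∀ (m : ℕ) (k : Fin m → Fin N), Function.Injective k →
    ∀ f g : Fin N → Fin n,
    (List.ofFn fun i => leg M (k i)).prod f g
      = if ∀ l, (∀ i, k i ≠ l) → f l = g l
        then (List.ofFn fun i => M (f (k i)) (g (k i))).prod else 0 := by
  intro m
  induction m with
  | zero =>
    intro k hk f g
    simp only [List.ofFn_zero, List.prod_nil, Matrix.one_apply]
    have hiff : (f = g) ↔ (∀ l, (∀ i : Fin 0, k i ≠ l) → f l = g l) :=
      ⟨fun h l _ => congrFun h l, fun h => funext fun l => h l (fun i => i.elim0)⟩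
    rw [if_congr hiff rfl rfl]
  | succ m ih =>
    intro k hk f g
    have hks : Function.Injective (fun i : Fin m => k i.succ) :=
      fun a b hab => Fin.succ_injective m (hk hab)
    rw [List.ofFn_succ, List.prod_cons, Matrix.mul_apply]
    -- restrict the sum to functions of the form update f (k 0) x
    have hzero : ∀ h ∈ Finset.univ, h ∉ Finset.univ.image (Function.update f (k 0)) →
        leg M (k 0) f h * (List.ofFn fun i : Fin m => leg M (k i.succ)).prod h g = 0 := by
      intro h _ hmem
      have : ¬ (∀ l, l ≠ k 0 → f l = h l) := by
        intro hcond
        apply hmem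
        refine Finset.mem_image.2 ⟨h (k 0), Finset.mem_univ _, ?_⟩
        funext l
        by_cases hl : l = k 0
        · subst hl; simp
        · rw [Function.update_of_ne hl]; exact hcond l hl
      rw [leg, if_neg this, zero_mul]
    rw [← Finset.sum_subset (Finset.subset_univ _) hzero,
      Finset.sum_image (fun a _ b _ hab => Function.update_injective f (k 0) hab)]
    have hterm : ∀ x : Fin n,
        leg M (k 0) f (Function.update f (k 0) x) *
          (List.ofFn fun i : Fin m => leg M (k i.succ)).prod (Function.update f (k 0) x) g
        = M (f (k 0)) x *
            (if (x = g (k 0) ∧ ∀ l, (∀ i, k i ≠ l) → f l = g l)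
             then (List.ofFn fun i : Fin m => M (f (k i.succ)) (g (k i.succ))).prod else 0) := by
      intro x
      have h1 : leg M (k 0) f (Function.update f (k 0) x) = M (f (k 0)) x := by
        rw [leg, if_pos, Function.update_self]
        intro l hl; rw [Function.update_of_ne hl]
      rw [h1, ih _ hks]
      congr 1
      have hne0 : ∀ i : Fin m, k i.succ ≠ k 0 := fun i h => Fin.succ_ne_zero i (hk h)
      have hprodeq : (List.ofFn fun i : Fin m =>
            M (Function.update f (k 0) x (k i.succ)) (g (k i.succ)))
          = List.ofFn fun i : Fin m => M (f (k i.succ)) (g (k i.succ)) := by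
        congr 1; funext i; rw [Function.update_of_ne (hne0 i)]
      have hcond : (∀ l, (∀ i : Fin m, k i.succ ≠ l) → Function.update f (k 0) x l = g l)
          ↔ (x = g (k 0) ∧ ∀ l, (∀ i, k i ≠ l) → f l = g l) := by
        constructor
        · intro hc
          refine ⟨by simpa using hc (k 0) hne0, fun l hl => ?_⟩
          have hlk : l ≠ k 0 := fun h => hl 0 h.symm
          have := hc l (fun i => hl i.succ)
          rwa [Function.update_of_ne hlk] at this
        · rintro ⟨hx, hc⟩ l hl
          by_cases hlk : l = k 0
          · subst hlk; simpa using hx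
          · rw [Function.update_of_ne hlk]
            exact hc l (fun i => Fin.cases (fun h => hlk h.symm) (fun j => hl j) i)
      rw [if_congr hcond rfl rfl, hprodeq]
    rw [Finset.sum_congr rfl (fun x _ => hterm x)]
    by_cases hC : ∀ l, (∀ i, k i ≠ l) → f l = g l
    · rw [if_pos hC, List.ofFn_succ, List.prod_cons]
      have hstep : ∀ x : Fin n,
          (M (f (k 0)) x * if x = g (k 0) ∧ ∀ l, (∀ i, k i ≠ l) → f l = g l
            then (List.ofFn fun i : Fin m => M (f (k i.succ)) (g (k i.succ))).prod else 0)
          = if x = g (k 0)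
            then M (f (k 0)) x *
              (List.ofFn fun i : Fin m => M (f (k i.succ)) (g (k i.succ))).prod else 0 := by
        intro x
        by_cases hx : x = g (k 0)
        · rw [if_pos ⟨hx, hC⟩, if_pos hx]
        · rw [if_neg (fun hc => hx hc.1), if_neg hx, mul_zero]
      rw [Finset.sum_congr rfl (fun x _ => hstep x),
        Finset.sum_ite_eq' Finset.univ (g (k 0))]
      simp
    · rw [if_neg hC]
      rw [Finset.sum_congr rfl (fun x _ => by rw [if_neg (fun hc => hC hc.2), mul_zero])]
      simp
noncomputable def fiberEquiv (k : Fin m → Fin N) (hk : Function.Injective k)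
    (h : Fin m → Fin n) (hh : Function.Injective h) :
    {g : Fin N → Fin n // Function.Injective g ∧ g ∘ k = h}
      ≃ ({x : Fin N // x ∉ Set.range k} ↪ {y : Fin n // y ∉ Set.range h}) where
  toFun g := ⟨fun x => ⟨g.1 x.1, by
      rintro ⟨i, hi⟩
      have : g.1 (k i) = g.1 x.1 := by
        rw [show g.1 (k i) = h i from congrFun g.2.2 i, hi]
      exact x.2 ⟨i, g.2.1 this⟩⟩,
    fun a b hab => Subtype.ext (g.2.1 (congrArg Subtype.val hab))⟩
  invFun u := ⟨fun x =>
      if hx : x ∈ Set.range k then h ((Equiv.ofInjective k hk).symm ⟨x, hx⟩)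
      else (u ⟨x, hx⟩ : Fin n), by
    constructor
    · intro a b hab
      simp only at hab
      by_cases ha : a ∈ Set.range k <;> by_cases hb : b ∈ Set.range k
      · rw [dif_pos ha, dif_pos hb] at hab
        have := hh hab
        have := congrArg (fun z => ((Equiv.ofInjective k hk) z : Fin N)) this
        simpa [Equiv.apply_symm_apply] using this
      · rw [dif_pos ha, dif_neg hb] at hab
        exact absurd (Set.mem_range.mpr ⟨_, hab⟩) (u ⟨b, hb⟩).2
      · rw [dif_neg ha, dif_pos hb] at hab
        exact absurd (Set.mem_range.mpr ⟨_, hab.symm⟩) (u ⟨a, ha⟩).2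
      · rw [dif_neg ha, dif_neg hb] at hab
        exact congrArg Subtype.val (u.injective (Subtype.ext hab))
    · funext i
      have hki : k i ∈ Set.range k := ⟨i, rfl⟩
      simp only [Function.comp_apply, dif_pos hki]
      congr 1
      exact (Equiv.ofInjective k hk).symm_apply_eq.mpr rfl⟩
  left_inv g := by
    apply Subtype.ext
    funext x
    by_cases hx : x ∈ Set.range k
    · obtain ⟨i, rfl⟩ := hx
      have hki : k i ∈ Set.range k := ⟨i, rfl⟩
      simp only [dif_pos hki]
      have h1 : (Equiv.ofInjective k hk).symm ⟨k i, hki⟩ = i :=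
        (Equiv.ofInjective k hk).symm_apply_eq.mpr rfl
      rw [h1]
      exact (congrFun g.2.2 i).symm
    · simp only [dif_neg hx]
      rfl
  right_inv u := by
    ext x
    simp only [Function.Embedding.coeFn_mk, dif_neg x.2]
    change (if hx : (x : Fin N) ∈ Set.range k then h ((Equiv.ofInjective k hk).symm ⟨x, hx⟩)
      else (u ⟨x, hx⟩ : Fin n)).val = _
    rw [dif_neg x.2]

lemma card_fiber (k : Fin m → Fin N) (hk : Function.Injective k)
    (h : Fin m → Fin n) (hh : Function.Injective h) :
    (Finset.univ.filter fun g : Fin N → Fin n =>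
        Function.Injective g ∧ g ∘ k = h).card
      = (n - m).descFactorial (N - m) := by
  classical
  rw [← Fintype.card_subtype]
  rw [Fintype.card_congr (fiberEquiv k hk h hh), Fintype.card_embedding_eq]
  have h1 : Fintype.card {x : Fin N // x ∉ Set.range k} = N - m := by
    rw [Fintype.card_subtype_compl, Fintype.card_fin,
      ← Fintype.card_congr (Equiv.ofInjective k hk), Fintype.card_fin]
  have h2 : Fintype.card {y : Fin n // y ∉ Set.range h} = n - m := by
    rw [Fintype.card_subtype_compl, Fintype.card_fin,
      ← Fintype.card_congr (Equiv.ofInjective h hh), Fintype.card_fin]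
  rw [h1, h2]

theorem trace_antisym_mul (L : Matrix (Fin N → Fin n) (Fin N → Fin n) R) :
    Matrix.trace (antisym R n N * L)
      = ((N.factorial : ℚ)⁻¹) •
          ∑ σ : Equiv.Perm (Fin N), ((Equiv.Perm.sign σ : ℤ)) •
            ∑ g : Fin N → Fin n, L g (g ∘ ⇑σ⁻¹) := by
  rw [antisym, smul_mul_assoc, Matrix.trace_smul, Finset.sum_mul]
  rw [Matrix.trace_sum]
  congr 1
  apply Finset.sum_congr rfl
  intro σ _
  rw [smul_mul_assoc, Matrix.trace_smul]
  have : Matrix.trace (permMat R n σ * L) = ∑ g : Fin N → Fin n, L g (g ∘ ⇑σ⁻¹) := by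
    rw [Matrix.trace]
    simp only [Matrix.diag, Matrix.mul_apply, permMat, ite_mul, one_mul, zero_mul]
    rw [Finset.sum_comm]
    apply Finset.sum_congr rfl
    intro g _
    rw [Finset.sum_eq_single (g ∘ ⇑σ⁻¹)]
    · rw [if_pos rfl]
    · intro b _ hb; rw [if_neg hb]
    · intro h; exact absurd (Finset.mem_univ _) h
  rw [this]
  rw [Int.cast_smul_eq_zsmul ℚ]  -- ((sgn:ℤ):ℚ) • x = (sgn:ℤ) • x
/-- Master lemma. -/
theorem trace_antisym_legs (M : Matrix (Fin n) (Fin n) R) (k : Fin m → Fin N)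
    (hk : Function.Injective k) :
    Matrix.trace (antisym R n N * (List.ofFn fun i : Fin m => leg M (k i)).prod)
      = (((n - m).descFactorial (N - m) : ℚ) / (N.factorial : ℚ)) •
          ∑ h : Fin m → Fin n, altD M h := by
  classical
  rw [trace_antisym_mul]
  have h1 : ∑ σ : Equiv.Perm (Fin N), ((Equiv.Perm.sign σ : ℤ)) •
        ∑ g : Fin N → Fin n,
          (List.ofFn fun i : Fin m => leg M (k i)).prod g (g ∘ ⇑σ⁻¹)
      = ∑ σ : Equiv.Perm (Fin N), ((Equiv.Perm.sign σ : ℤ)) •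
        ∑ g : Fin N → Fin n,
          (List.ofFn fun i : Fin m => leg M (k i)).prod g (g ∘ ⇑σ) := by
    refine Fintype.sum_equiv (Equiv.inv (Equiv.Perm (Fin N))) _ _ (fun σ => ?_)
    simp [Equiv.Perm.sign_inv]
  rw [h1]
  have hP : ∀ (σ : Equiv.Perm (Fin N)) (g : Fin N → Fin n),
      (List.ofFn fun i : Fin m => leg M (k i)).prod g (g ∘ ⇑σ)
        = (if ∀ l, (∀ i, k i ≠ l) → g l = g (σ l)
           then (List.ofFn fun i => M (g (k i)) (g (σ (k i)))).prod else 0) := by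
    intro σ g
    rw [prod_legs_apply M m k hk]
    simp only [Function.comp_apply]
  have h2 : ∑ σ : Equiv.Perm (Fin N), ((Equiv.Perm.sign σ : ℤ)) •
        ∑ g : Fin N → Fin n,
          (List.ofFn fun i : Fin m => leg M (k i)).prod g (g ∘ ⇑σ)
      = ∑ g : Fin N → Fin n, bigG M k g := by
    rw [Finset.sum_congr rfl (fun σ _ => by
      rw [Finset.sum_congr rfl (fun g _ => hP σ g), Finset.smul_sum])]
    rw [Finset.sum_comm]
    rfl
  rw [h2]
  have h3 : ∑ g : Fin N → Fin n, bigG M k g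
      = ∑ g ∈ Finset.univ.filter (fun g : Fin N → Fin n => Function.Injective g),
          altD M (g ∘ k) := by
    rw [← Finset.sum_subset (Finset.subset_univ _) (fun g _ hg =>
      bigG_eq_zero M k (fun hinj => hg (Finset.mem_filter.2 ⟨Finset.mem_univ _, hinj⟩)))]
    exact Finset.sum_congr rfl (fun g hg => bigG_inj M k hk (Finset.mem_filter.1 hg).2)
  rw [h3]
  rw [← Finset.sum_fiberwise_of_maps_to (g := fun g : Fin N → Fin n => g ∘ k)
    (t := Finset.univ) (fun g _ => Finset.mem_univ _) (fun g => altD M (g ∘ k))]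
  have hinner : ∀ h : Fin m → Fin n,
      (∑ g ∈ (Finset.univ.filter (fun g : Fin N → Fin n => Function.Injective g)).filter
          (fun g => g ∘ k = h), altD M (g ∘ k))
        = ((n - m).descFactorial (N - m)) • altD M h := by
    intro h
    rw [Finset.sum_congr rfl (fun g hg => by rw [(Finset.mem_filter.1 hg).2])]
    rw [Finset.sum_const]
    by_cases hh : Function.Injective h
    · congr 1
      rw [Finset.filter_filter]
      exact card_fiber k hk h hh
    · rw [altD_eq_zero M hh, smul_zero, smul_zero]
  rw [Finset.sum_congr rfl (fun h _ => hinner h), ← Finset.smul_sum]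
  rw [← Nat.cast_smul_eq_nsmul ℚ, smul_smul]
  congr 1
  rw [inv_mul_eq_div]

end ManinAux

/-- for a Manin matrix M and 1 ≤ k₁ < ⋯ < k_m ≤ n,
tr_{1,…,n}(A_n M^{(k₁)}⋯M^{(k_m)}) = tr_{1,…,n}(A_n M⁽¹⁾⋯M⁽ᵐ⁾)
  = (m!(n−m)!/n!) · tr_{1,…,m}(A_m M⁽¹⁾⋯M⁽ᵐ⁾). -/
theorem trace_antisym_legs_choice {R : Type*} [Ring R] [Algebra ℚ R] {n m : ℕ}
    (M : Matrix (Fin n) (Fin n) R) (hM : IsManin M) (hmn : m ≤ n)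
    (k : Fin m → Fin n) (hk : StrictMono k) :
    Matrix.trace (antisym R n n * (List.ofFn fun i : Fin m => leg M (k i)).prod)
      = Matrix.trace (antisym R n n *
          (List.ofFn fun i : Fin m => leg M (Fin.castLE hmn i)).prod) ∧
    Matrix.trace (antisym R n n *
        (List.ofFn fun i : Fin m => leg M (Fin.castLE hmn i)).prod)
      = ((m.factorial * (n - m).factorial : ℚ) / (n.factorial : ℚ)) •
          Matrix.trace (antisym R n m * legProd M m) := by
  constructor
  · rw [trace_antisym_legs M k hk.injective,
      trace_antisym_legs M (Fin.castLE hmn) (Fin.castLE_injective hmn)]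
  · rw [trace_antisym_legs M (Fin.castLE hmn) (Fin.castLE_injective hmn)]
    have hm : Matrix.trace (antisym R n m * legProd M m)
        = (((n - m).descFactorial (m - m) : ℚ) / (m.factorial : ℚ)) •
            ∑ h : Fin m → Fin n, altD M h := by
      have h0 := trace_antisym_legs (N := m) M (fun i : Fin m => i) (fun a b h => h)
      simpa [legProd] using h0
    rw [hm, smul_smul]
    rw [Nat.sub_self, Nat.descFactorial_zero, Nat.descFactorial_self]
    congr 1
    have hm0 : (m.factorial : ℚ) ≠ 0 := Nat.cast_ne_zero.mpr (Nat.factorial_ne_zero m)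
    have hn0 : (n.factorial : ℚ) ≠ 0 := Nat.cast_ne_zero.mpr (Nat.factorial_ne_zero n)
    field_simp
    ring
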